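/- Let X be a locally path connected and semilocally simply connected topological space. A subset M ⊆ Π₁(X) is open in the CO' (quotient) topology if and only if for every [α] ∈ M there exist path-connected, relatively inessential open neighbourhoods U of α(1) and V of α(0) in X such that N([α],U,V) ⊆ M. (That is, the CO' topology and the UC topology on Π₁(X) coincide.) -/

import Mathlib

open unitInterval Set

noncomputable section

variable {X : Type*} [TopologicalSpace X]

/-- The path-homotopy (homotopy relative to `{0,1}`) relation on `C(I, X)`. -/
def pRel (f g : C(I, X)) : Prop := f.HomotopicRel g {0, 1}

/-- The path-homotopy setoid on `C(I, X)`. -/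
def pSetoid (X : Type*) [TopologicalSpace X] : Setoid C(I, X) :=
  ⟨pRel, ContinuousMap.HomotopicRel.equivalence⟩

/-- The fundamental groupoid `Π₁(X)` as the quotient of the path space `P(X) = C(I, X)`
(with the compact-open topology) by path homotopy; it carries the quotient (CO') topology. -/
abbrev Pi1 (X : Type*) [TopologicalSpace X] := Quotient (pSetoid X)

/-- The quotient map `q : P(X) → Π₁(X)`. -/
def pq : C(I, X) → Pi1 X := Quotient.mk (pSetoid X)

theorem pRel.endpts {f g : C(I, X)} (h : pRel f g) {t : I} (ht : t ∈ ({0, 1} : Set I)) :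
    f t = g t := h.some.fst_eq_snd ht

/-- The source map `s : Π₁(X) → X`, `[γ] ↦ γ(0)`. -/
def srcMap : Pi1 X → X :=
  Quotient.lift (fun f : C(I, X) => f 0) fun _ _ h =>
    pRel.endpts h (by simp)

/-- The range map `r : Π₁(X) → X`, `[γ] ↦ γ(1)`. -/
def rngMap : Pi1 X → X :=
  Quotient.lift (fun f : C(I, X) => f 1) fun _ _ h =>
    pRel.endpts h (by simp)

/-- A continuous map `I → X` regarded as a `Path` between its endpoints. -/
def toPath (f : C(I, X)) : Path (f 0) (f 1) := ⟨f, rfl, rfl⟩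

/-- Concatenation `α ⧠ β` of paths: traverse `β` first and then `α`
(given `β 1 = α 0`). -/
def concat (α β : C(I, X)) (h : β 1 = α 0) : C(I, X) :=
  ((toPath β).trans ((toPath α).cast h rfl)).toContinuousMap

@[simp] theorem concat_zero (α β : C(I, X)) (h : β 1 = α 0) : concat α β h 0 = β 0 :=
  ((toPath β).trans ((toPath α).cast h rfl)).source

@[simp] theorem concat_one (α β : C(I, X)) (h : β 1 = α 0) : concat α β h 1 = α 1 :=
  ((toPath β).trans ((toPath α).cast h rfl)).target

-- ## toolkit

theorem pRel.refl (f : C(I, X)) : pRel f f := (pSetoid X).iseqv.refl f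
theorem pRel.symm' {f g : C(I, X)} (h : pRel f g) : pRel g f := (pSetoid X).iseqv.symm h
theorem pRel.trans' {f g h : C(I, X)} (h1 : pRel f g) (h2 : pRel g h) : pRel f h :=
  (pSetoid X).iseqv.trans h1 h2

theorem pq_eq_iff {f g : C(I, X)} : pq f = pq g ↔ pRel f g :=
  ⟨fun h => Quotient.exact h, fun h => Quotient.sound h⟩

theorem pRel_coe {f g f' g' : C(I, X)} (h : pRel f g) (hf : ⇑f = ⇑f') (hg : ⇑g = ⇑g') :
    pRel f' g' := by
  obtain rfl : f = f' := ContinuousMap.ext fun t => congrFun hf t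
  obtain rfl : g = g' := ContinuousMap.ext fun t => congrFun hg t
  exact h

theorem pRel_path {x y : X} {p q : Path x y} (h : p.Homotopic q) :
    pRel p.toContinuousMap q.toContinuousMap := h

theorem trans_coe {x y z x' y' z' : X} (p : Path x y) (q : Path y z) (p' : Path x' y')
    (q' : Path y' z') (hp : ⇑p = ⇑p') (hq : ⇑q = ⇑q') : ⇑(p.trans q) = ⇑(p'.trans q') := by
  funext t
  rw [Path.trans_apply, Path.trans_apply]
  split_ifs with h
  · exact congrFun hp _
  · exact congrFun hq _

open scoped Classical in
/-- concat with junk value if endpoints don't match. -/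
def cc (α β : C(I, X)) : C(I, X) := if h : β 1 = α 0 then concat α β h else α

theorem cc_eq {α β : C(I, X)} (h : β 1 = α 0) : cc α β = concat α β h := by
  unfold cc; rw [dif_pos h]

theorem cc_zero {α β : C(I, X)} (h : β 1 = α 0) : cc α β 0 = β 0 := by
  rw [cc_eq h]; simp

theorem cc_one {α β : C(I, X)} (h : β 1 = α 0) : cc α β 1 = α 1 := by
  rw [cc_eq h]; simp

theorem range_concat {α β : C(I, X)} (h : β 1 = α 0) :
    range (concat α β h) ⊆ range β ∪ range α := by
  rintro x ⟨t, rfl⟩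
  have e : concat α β h t = ((toPath β).trans ((toPath α).cast h rfl)) t := rfl
  rw [e, Path.trans_apply]
  split_ifs
  · exact Or.inl ⟨_, rfl⟩
  · exact Or.inr ⟨_, (congrFun (Path.cast_coe (toPath α) h rfl) _).symm⟩

theorem range_cc {α β : C(I, X)} (h : β 1 = α 0) :
    range (cc α β) ⊆ range β ∪ range α := by
  rw [cc_eq h]; exact range_concat h

def symmCM (f : C(I, X)) : C(I, X) := (toPath f).symm.toContinuousMap

@[simp] theorem symmCM_zero (f : C(I, X)) : symmCM f 0 = f 1 := (toPath f).symm.source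
@[simp] theorem symmCM_one (f : C(I, X)) : symmCM f 1 = f 0 := (toPath f).symm.target

theorem range_symmCM (f : C(I, X)) : range (symmCM f) = range f :=
  Path.symm_range (toPath f)

-- congruence
theorem pRel.concat_congr {α β α' β' : C(I, X)} (hα : pRel α α') (hβ : pRel β β')
    (h : β 1 = α 0) (h' : β' 1 = α' 0) : pRel (concat α β h) (concat α' β' h') := by
  have e0 : β 0 = β' 0 := hβ.endpts (by simp)
  have e1 : β 1 = β' 1 := hβ.endpts (by simp)
  have f0 : α 0 = α' 0 := hα.endpts (by simp)
  have f1 : α 1 = α' 1 := hα.endpts (by simp)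
  have hb : (toPath β).Homotopic ((toPath β').cast e0 e1) := hβ
  have ha : ((toPath α).cast h rfl).Homotopic
      ((toPath α').cast (h.trans f0) f1) := hα
  have := Path.Homotopic.hcomp hb ha
  refine pRel_coe (pRel_path this) rfl ?_
  exact trans_coe _ _ _ _ (Path.cast_coe _ _ _) (by rw [Path.cast_coe, Path.cast_coe])

theorem pRel.cc_congr {α β α' β' : C(I, X)} (hα : pRel α α') (hβ : pRel β β')
    (h : β 1 = α 0) : pRel (cc α β) (cc α' β') := by
  have h' : β' 1 = α' 0 := by
    rw [← hβ.endpts (by simp : (1:I) ∈ ({0,1} : Set I)),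
      ← hα.endpts (by simp : (0:I) ∈ ({0,1} : Set I))]
    exact h
  rw [cc_eq h, cc_eq h']
  exact hα.concat_congr hβ h h'

theorem constCM_toPath (x : X) : ⇑(toPath (ContinuousMap.const I x)) = ⇑(Path.refl x) := rfl

-- units
theorem pRel_cc_const_right (a : C(I, X)) : pRel (cc a (ContinuousMap.const I (a 0))) a := by
  rw [cc_eq rfl]
  have h : ((Path.refl (a 0)).trans (toPath a)).Homotopic (toPath a) :=
    ⟨Path.Homotopy.reflTrans (toPath a)⟩
  refine pRel_coe (pRel_path h) ?_ rfl
  exact (trans_coe _ _ _ _ rfl (Path.cast_coe _ _ _)).symm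

theorem pRel_cc_const_left (a : C(I, X)) : pRel (cc (ContinuousMap.const I (a 1)) a) a := by
  rw [cc_eq rfl]
  have h : ((toPath a).trans (Path.refl (a 1))).Homotopic (toPath a) :=
    ⟨Path.Homotopy.transRefl (toPath a)⟩
  refine pRel_coe (pRel_path h) ?_ rfl
  exact (trans_coe _ _ _ _ rfl (Path.cast_coe _ _ _)).symm

-- cancellation : traverse b then symm b
theorem pRel_cc_symm_self (b : C(I, X)) :
    pRel (cc (symmCM b) b) (ContinuousMap.const I (b 0)) := by
  have h : (b : C(I,X)) 1 = symmCM b 0 := (symmCM_zero b).symm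
  rw [cc_eq h]
  have hh : ((toPath b).trans (toPath b).symm).Homotopic (Path.refl (b 0)) :=
    ⟨(Path.Homotopy.reflTransSymm (toPath b)).symm⟩
  refine pRel_coe (pRel_path hh) ?_ rfl
  have key : ⇑((toPath b).trans ((toPath (symmCM b)).cast h rfl)) =
      ⇑((toPath b).trans (toPath b).symm) :=
    trans_coe (toPath b) ((toPath (symmCM b)).cast h rfl) (toPath b) (toPath b).symm rfl
      (by rw [Path.cast_coe]; rfl)
  exact key.symm

-- associativity : cc (cc x y) z ~ cc x (cc y z)   (z first, then y, then x)
theorem pRel_cc_assoc (x y z : C(I, X)) (hzy : z 1 = y 0) (hyx : y 1 = x 0) :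
    pRel (cc (cc x y) z) (cc x (cc y z)) := by
  have h1 : z 1 = (cc x y) 0 := by rw [cc_zero hyx]; exact hzy
  have h2 : (cc y z) 1 = x 0 := by rw [cc_one hzy]; exact hyx
  rw [cc_eq hyx] at h1 ⊢
  rw [cc_eq hzy] at h2 ⊢
  rw [cc_eq h1, cc_eq h2]
  have hB : ⇑(((toPath z).trans ((toPath y).cast hzy rfl)).trans ((toPath x).cast hyx rfl)) =
      ⇑(concat x (concat y z hzy) h2) := by
    refine trans_coe _ _ (toPath (concat y z hzy)) ((toPath x).cast h2 rfl) rfl ?_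
    rw [Path.cast_coe, Path.cast_coe]
  have hA : ⇑((toPath z).trans (((toPath y).cast hzy rfl).trans ((toPath x).cast hyx rfl))) =
      ⇑(concat (concat x y hyx) z h1) := by
    refine trans_coe _ _ (toPath z) ((toPath (concat x y hyx)).cast h1 rfl) rfl ?_
    rw [Path.cast_coe]
    exact (trans_coe (toPath y) ((toPath x).cast hyx rfl) ((toPath y).cast hzy rfl)
      ((toPath x).cast hyx rfl) (by rw [Path.cast_coe]) rfl).symm
  exact (pRel_coe (pRel_path ⟨Path.Homotopy.transAssoc (toPath z) ((toPath y).cast hzy rfl)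
    ((toPath x).cast hyx rfl)⟩) hB hA).symm'

/-- A subset `U ⊆ X` is relatively inessential in `X` if every loop in `U` is
null-homotopic (path-homotopic to a constant path) in `X`. -/
def RelInessential (X : Type*) [TopologicalSpace X] (U : Set X) : Prop :=
  ∀ γ : C(I, X), Set.range γ ⊆ U → γ 1 = γ 0 →
    pRel γ (ContinuousMap.const I (γ 0))

/-- iterated concatenation: `comps f k = f k ⧠ ... ⧠ f 1 ⧠ f 0`. -/
def comps (f : ℕ → C(I, X)) : ℕ → C(I, X)
  | 0 => f 0
  | (k+1) => cc (f (k+1)) (comps f (k))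

theorem comps_one {f : ℕ → C(I, X)} (k : ℕ) (hadj : ∀ i < k, f (i+1) 0 = f i 1) :
    comps f k 1 = f k 1 := by
  induction k with
  | zero => rfl
  | succ k ih =>
      have h : comps f k 1 = f (k+1) 0 := by
        rw [ih (fun i hi => hadj i (Nat.lt_succ_of_lt hi))]
        exact (hadj k (Nat.lt_succ_self k)).symm
      rw [comps, cc_one h]

theorem comps_zero {f : ℕ → C(I, X)} (k : ℕ) (hadj : ∀ i < k, f (i+1) 0 = f i 1) :
    comps f k 0 = f 0 0 := by
  induction k with
  | zero => rfl
  | succ k ih =>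
      have h : comps f k 1 = f (k+1) 0 := by
        rw [comps_one k (fun i hi => hadj i (Nat.lt_succ_of_lt hi))]
        exact (hadj k (Nat.lt_succ_self k)).symm
      rw [comps, cc_zero h]
      exact ih (fun i hi => hadj i (Nat.lt_succ_of_lt hi))

/-- Core algebraic lemma: if `a, b, c, d` all run inside a relatively inessential set `W`,
`c` connects `a 1` to `b 1` and `d` connects `b 0` to `a 0`, then `b ~ c ⧠ a ⧠ d`. -/
theorem cal {W : Set X} (hW : RelInessential X W) (a b c d : C(I, X))
    (ha : range a ⊆ W) (hb : range b ⊆ W) (hc : range c ⊆ W) (hd : range d ⊆ W)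
    (hc0 : c 0 = a 1) (hc1 : c 1 = b 1) (hd0 : d 0 = b 0) (hd1 : d 1 = a 0) :
    pRel b (cc c (cc a d)) := by
  have had : d 1 = a 0 := hd1
  have hca : (cc a d) 1 = c 0 := by rw [cc_one had]; exact hc0.symm
  -- x = c ⧠ a ⧠ d
  set x : C(I, X) := cc c (cc a d) with hxdef
  have hx0 : x 0 = b 0 := by rw [hxdef, cc_zero hca, cc_zero had]; exact hd0
  have hx1 : x 1 = b 1 := by rw [hxdef, cc_one hca]; exact hc1
  have hrx : range x ⊆ W := by
    refine (range_cc hca).trans (Set.union_subset ((range_cc had).trans ?_) hc)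
    exact Set.union_subset hd ha
  -- the loop ℓ = x ⧠ (symm b)
  have hsb : (b : C(I,X)) 1 = b 1 := rfl
  have hℓdef : symmCM b 1 = x 0 := by rw [symmCM_one, hx0]
  set ℓ : C(I, X) := cc x (symmCM b) with hldef
  have hℓ0 : ℓ 0 = b 1 := by rw [hldef, cc_zero hℓdef, symmCM_zero]
  have hℓ1 : ℓ 1 = b 1 := by rw [hldef, cc_one hℓdef]; exact hx1
  have hrℓ : range ℓ ⊆ W := by
    refine (range_cc hℓdef).trans (Set.union_subset ?_ hrx)
    rw [range_symmCM]; exact hb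
  have hnull : pRel ℓ (ContinuousMap.const I (ℓ 0)) := hW ℓ hrℓ (hℓ1.trans hℓ0.symm)
  -- b ~ const(b1) ⧠ b ~ ℓ ⧠ b ~ (x ⧠ symm b) ⧠ b ~ x ⧠ (symm b ⧠ b) ~ x ⧠ const(b0) ~ x
  have s1 : pRel b (cc (ContinuousMap.const I (b 1)) b) := (pRel_cc_const_left b).symm'
  have s2 : pRel (cc (ContinuousMap.const I (b 1)) b) (cc ℓ b) := by
    have : pRel (ContinuousMap.const I (b 1)) ℓ := by
      have := hnull.symm'
      rw [hℓ0] at this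
      exact this
    exact pRel.cc_congr this (pRel.refl b) rfl
  have s3 : pRel (cc ℓ b) (cc x (cc (symmCM b) b)) := by
    rw [hldef]
    exact pRel_cc_assoc x (symmCM b) b (symmCM_zero b).symm hℓdef
  have s4 : pRel (cc x (cc (symmCM b) b)) (cc x (ContinuousMap.const I (b 0))) := by
    refine pRel.cc_congr (pRel.refl x) (pRel_cc_symm_self b) ?_
    rw [cc_one (symmCM_zero b).symm, symmCM_one, hx0]
  have s5 : pRel (cc x (ContinuousMap.const I (b 0))) x := by
    have := pRel_cc_const_right x
    rw [hx0] at this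
    exact this
  exact ((((s1.trans' s2).trans' s3).trans' s4).trans' s5)

/-- The main inductive lemma. -/
theorem keylemma : ∀ (k : ℕ) (a b c : ℕ → C(I, X)) (d : C(I, X)) (W : ℕ → Set X),
    (∀ i < k, a (i+1) 0 = a i 1) → (∀ i < k, b (i+1) 0 = b i 1) →
    (∀ i ≤ k, RelInessential X (W i)) →
    (∀ i ≤ k, range (a i) ⊆ W i) → (∀ i ≤ k, range (b i) ⊆ W i) →
    (∀ i ≤ k, c i 0 = a i 1) → (∀ i ≤ k, c i 1 = b i 1) →
    (∀ i ≤ k, range (c i) ⊆ W i) → (∀ i < k, range (c i) ⊆ W (i+1)) →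
    d 0 = b 0 0 → d 1 = a 0 0 → range d ⊆ W 0 →
    pRel (comps b k) (cc (c k) (cc (comps a k) d)) := by
  intro k
  induction k with
  | zero =>
      intro a b c d W _ _ hW ha hb hc0 hc1 hcr _ hd0 hd1 hdr
      exact cal (hW 0 le_rfl) (a 0) (b 0) (c 0) d (ha 0 le_rfl) (hb 0 le_rfl)
        (hcr 0 le_rfl) hdr (hc0 0 le_rfl) (hc1 0 le_rfl) hd0 hd1
  | succ k ih =>
      intro a b c d W hadja hadjb hW ha hb hc0 hc1 hcr hcr' hd0 hd1 hdr
      have hadja' : ∀ i < k, a (i+1) 0 = a i 1 := fun i hi => hadja i (Nat.lt_succ_of_lt hi)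
      have hadjb' : ∀ i < k, b (i+1) 0 = b i 1 := fun i hi => hadjb i (Nat.lt_succ_of_lt hi)
      have IH : pRel (comps b k) (cc (c k) (cc (comps a k) d)) :=
        ih a b c d W hadja' hadjb' (fun i hi => hW i (Nat.le_succ_of_le hi))
          (fun i hi => ha i (Nat.le_succ_of_le hi)) (fun i hi => hb i (Nat.le_succ_of_le hi))
          (fun i hi => hc0 i (Nat.le_succ_of_le hi)) (fun i hi => hc1 i (Nat.le_succ_of_le hi))
          (fun i hi => hcr i (Nat.le_succ_of_le hi)) (fun i hi => hcr' i (Nat.lt_succ_of_lt hi))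
          hd0 hd1 hdr
      -- abbreviations
      set A := comps a k with hA
      set Z := cc A d with hZ
      have hA1 : A 1 = a k 1 := comps_one k hadja'
      have hA0 : A 0 = a 0 0 := comps_zero k hadja'
      have hdA : d 1 = A 0 := by rw [hA0]; exact hd1
      have hZ1 : Z 1 = a k 1 := by rw [hZ, cc_one hdA]; exact hA1
      have hZ0 : Z 0 = b 0 0 := by rw [hZ, cc_zero hdA]; exact hd0
      -- CAL in W (k+1) : b (k+1) ~ c (k+1) ⧠ a (k+1) ⧠ symm (c k)
      have hs0 : symmCM (c k) 0 = b (k+1) 0 := by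
        rw [symmCM_zero, hc1 k (Nat.le_succ k), hadjb k (Nat.lt_succ_self k)]
      have hs1 : symmCM (c k) 1 = a (k+1) 0 := by
        rw [symmCM_one, hc0 k (Nat.le_succ k), hadja k (Nat.lt_succ_self k)]
      have calstep : pRel (b (k+1))
          (cc (c (k+1)) (cc (a (k+1)) (symmCM (c k)))) :=
        cal (hW (k+1) le_rfl) (a (k+1)) (b (k+1)) (c (k+1)) (symmCM (c k))
          (ha (k+1) le_rfl) (hb (k+1) le_rfl) (hcr (k+1) le_rfl)
          (by rw [range_symmCM]; exact hcr' k (Nat.lt_succ_self k))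
          (hc0 (k+1) le_rfl) (hc1 (k+1) le_rfl) hs0 hs1
      -- endpoints
      have hck1 : c k 1 = comps b k 1 := by
        rw [comps_one k hadjb']; exact hc1 k (Nat.le_succ k)
      have hcompsbk : comps b k 1 = b (k+1) 0 := by
        rw [comps_one k hadjb']; exact (hadjb k (Nat.lt_succ_self k)).symm
      -- step 1 : comps b (k+1) = cc (b (k+1)) (comps b k) ~ cc [calstep...] [IH...]
      have hZck : Z 1 = c k 0 := by rw [hZ1]; exact (hc0 k (Nat.le_succ k)).symm
      have hIHone : (cc (c k) Z) 1 = b (k+1) 0 := by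
        rw [cc_one hZck, hc1 k (Nat.le_succ k)]
        exact (hadjb k (Nat.lt_succ_self k)).symm
      -- comps b (k+1) ~ cc [c(k+1) ⧠ a(k+1) ⧠ s] [c k ⧠ Z]
      have step1 : pRel (comps b (k+1))
          (cc (cc (c (k+1)) (cc (a (k+1)) (symmCM (c k)))) (cc (c k) Z)) := by
        have : comps b (k+1) = cc (b (k+1)) (comps b k) := rfl
        rw [this]
        exact pRel.cc_congr calstep IH hcompsbk
      set s := symmCM (c k) with hsdef
      set P := cc (a (k+1)) s with hPdef
      set Q := cc (c k) Z with hQdef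
      have hP0 : P 0 = b (k+1) 0 := by rw [hPdef, cc_zero hs1]; exact hs0
      have hP1 : P 1 = a (k+1) 1 := by rw [hPdef, cc_one hs1]
      have hQP : Q 1 = P 0 := by rw [hIHone, hP0]
      have hPc : P 1 = c (k+1) 0 := by rw [hP1]; exact (hc0 (k+1) le_rfl).symm
      have assoc1 : pRel (cc (cc (c (k+1)) P) Q) (cc (c (k+1)) (cc P Q)) :=
        pRel_cc_assoc (c (k+1)) P Q hQP hPc
      -- inner chain : cc P Q ~ cc (comps a (k+1)) d
      have hQs : Q 1 = s 0 := by rw [hIHone, hs0]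
      have inner1 : pRel (cc P Q) (cc (a (k+1)) (cc s Q)) :=
        pRel_cc_assoc (a (k+1)) s Q hQs hs1
      have hcs : (c k) 1 = s 0 := (symmCM_zero (c k)).symm
      have inner2 : pRel (cc s Q) Z := by
        have a3 : pRel (cc (cc s (c k)) Z) (cc s Q) := by
          rw [hQdef]
          exact pRel_cc_assoc s (c k) Z hZck hcs
        have cancel : pRel (cc (cc s (c k)) Z) (cc (ContinuousMap.const I ((c k) 0)) Z) := by
          refine pRel.cc_congr ?_ (pRel.refl Z) ?_
          · rw [hsdef]; exact pRel_cc_symm_self (c k)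
          · rw [cc_zero hcs]; exact hZck
        have unit : pRel (cc (ContinuousMap.const I ((c k) 0)) Z) Z := by
          have e : (c k) 0 = Z 1 := hZck.symm
          rw [e]
          exact pRel_cc_const_left Z
        exact (a3.symm'.trans' cancel).trans' unit
      have hsQ1 : (cc s Q) 1 = a (k+1) 0 := by rw [cc_one hQs]; exact hs1
      have inner3 : pRel (cc (a (k+1)) (cc s Q)) (cc (a (k+1)) Z) :=
        pRel.cc_congr (pRel.refl (a (k+1))) inner2 hsQ1
      have hAa : A 1 = a (k+1) 0 := by
        rw [hA1]; exact (hadja k (Nat.lt_succ_self k)).symm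
      have inner4 : pRel (cc (a (k+1)) Z) (cc (comps a (k+1)) d) := by
        have e : comps a (k+1) = cc (a (k+1)) A := rfl
        rw [e, hZ]
        exact (pRel_cc_assoc (a (k+1)) A d hdA hAa).symm'
      have inner : pRel (cc P Q) (cc (comps a (k+1)) d) :=
        (inner1.trans' inner3).trans' inner4
      have hPQ1 : (cc P Q) 1 = c (k+1) 0 := by rw [cc_one hQP]; exact hPc
      have outer : pRel (cc (c (k+1)) (cc P Q))
          (cc (c (k+1)) (cc (comps a (k+1)) d)) :=
        pRel.cc_congr (pRel.refl (c (k+1))) inner hPQ1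
      exact (step1.trans' assoc1).trans' outer

-- ## segments and splitting


/-- The restriction of `γ` to `[x, y]`, as an element of `C(I, X)`. -/
def seg (γ : C(I, X)) (x y : I) : C(I, X) :=
  γ.comp ⟨fun t => Set.projIcc (0:ℝ) 1 zero_le_one ((x:ℝ) + ((y:ℝ) - x) * t),
    (continuous_projIcc).comp (by fun_prop)⟩

theorem seg_apply (γ : C(I, X)) (x y t : I) :
    seg γ x y t = γ (Set.projIcc (0:ℝ) 1 zero_le_one ((x:ℝ) + ((y:ℝ) - x) * t)) := rfl

theorem seg_apply_mem (γ : C(I, X)) {x y : I} (hxy : x ≤ y) (t : I) :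
    seg γ x y t = γ ⟨(x:ℝ) + ((y:ℝ) - x) * t,
      ⟨by nlinarith [t.2.1, t.2.2, x.2.1, (sub_nonneg.mpr (Subtype.coe_le_coe.mpr hxy))],
       by nlinarith [t.2.1, t.2.2, y.2.2, (sub_nonneg.mpr (Subtype.coe_le_coe.mpr hxy))]⟩⟩ := by
  rw [seg_apply]
  congr 1
  apply Set.projIcc_of_mem

@[simp] theorem seg_zero (γ : C(I, X)) (x y : I) : seg γ x y 0 = γ x := by
  rw [seg_apply]
  have e : (x:ℝ) + ((y:ℝ) - x) * ((0:I):ℝ) = ((x:I):ℝ) := by norm_num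
  rw [e, Set.projIcc_val]

@[simp] theorem seg_one (γ : C(I, X)) (x y : I) : seg γ x y 1 = γ y := by
  rw [seg_apply]
  have e : (x:ℝ) + ((y:ℝ) - x) * ((1:I):ℝ) = ((y:I):ℝ) := by norm_num
  rw [e, Set.projIcc_val]

theorem seg_zero_one (γ : C(I, X)) : seg γ 0 1 = γ := by
  ext t
  rw [seg_apply]
  have e : (((0:I)):ℝ) + (((1:I):ℝ) - ((0:I):ℝ)) * t = ((t:I):ℝ) := by norm_num
  rw [e, Set.projIcc_val]

theorem range_seg (γ : C(I, X)) {x y : I} (hxy : x ≤ y) {W : Set X}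
    (h : ∀ s : I, x ≤ s → s ≤ y → γ s ∈ W) : range (seg γ x y) ⊆ W := by
  rintro _ ⟨t, rfl⟩
  rw [seg_apply_mem γ hxy t]
  refine h _ ?_ ?_
  · show (x:ℝ) ≤ (x:ℝ) + ((y:ℝ) - x) * t
    nlinarith [t.2.1, (sub_nonneg.mpr (Subtype.coe_le_coe.mpr hxy))]
  · show (x:ℝ) + ((y:ℝ) - x) * t ≤ (y:ℝ)
    nlinarith [t.2.2, (sub_nonneg.mpr (Subtype.coe_le_coe.mpr hxy))]

theorem seg_const (γ : C(I, X)) (x : I) : seg γ x x = ContinuousMap.const I (γ x) := by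
  ext t
  rw [seg_apply]
  have e : (x:ℝ) + ((x:ℝ) - x) * t = ((x:I):ℝ) := by ring
  rw [e, Set.projIcc_val]
  rfl

/-- Splitting a segment at an intermediate point, up to path homotopy. -/
theorem seg_split (γ : C(I, X)) {x m y : I} (hxm : x ≤ m) (hmy : m ≤ y) :
    pRel (seg γ x y) (cc (seg γ m y) (seg γ x m)) := by
  have hend : (seg γ x m) 1 = (seg γ m y) 0 := by rw [seg_one, seg_zero]
  by_cases hdeg : (x:ℝ) = y
  · -- degenerate case : x = m = y
    have hym : (y:ℝ) ≤ m := by rw [← hdeg]; exact_mod_cast hxm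
    obtain rfl : m = y := Subtype.ext (le_antisymm (by exact_mod_cast hmy) hym)
    obtain rfl : x = m := Subtype.ext hdeg
    rw [seg_const]
    have h2 := pRel_cc_const_right (ContinuousMap.const I (γ x))
    exact h2.symm'
  have hxm' : (x:ℝ) ≤ m := by exact_mod_cast hxm
  have hmy' : (m:ℝ) ≤ y := by exact_mod_cast hmy
  have hlt : (x:ℝ) < y := lt_of_le_of_ne (hxm'.trans hmy') hdeg
  have h1 : (0:ℝ) ≤ (m:ℝ)-x := by linarith
  have h2 : (0:ℝ) ≤ (y:ℝ)-m := by linarith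
  have h3 : (0:ℝ) < (y:ℝ)-x := by linarith
  set g : I → ℝ := fun t => if (t:ℝ) ≤ 1/2 then (2*(t:ℝ))*(((m:ℝ)-x)/((y:ℝ)-x))
      else (((m:ℝ)-x) + (2*(t:ℝ)-1)*((y:ℝ)-m))/((y:ℝ)-x) with hgdef
  have hgmem : ∀ t : I, g t ∈ Set.Icc (0:ℝ) 1 := by
    intro t
    show (if (t:ℝ) ≤ 1/2 then (2*(t:ℝ))*(((m:ℝ)-x)/((y:ℝ)-x))
      else (((m:ℝ)-x) + (2*(t:ℝ)-1)*((y:ℝ)-m))/((y:ℝ)-x)) ∈ Set.Icc (0:ℝ) 1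
    have hq0 : (0:ℝ) ≤ ((m:ℝ)-x)/((y:ℝ)-x) := div_nonneg h1 h3.le
    have hq1 : ((m:ℝ)-x)/((y:ℝ)-x) ≤ 1 := (div_le_one h3).mpr (by linarith)
    split_ifs with ht
    · constructor
      · exact mul_nonneg (by linarith [t.2.1]) hq0
      · nlinarith [t.2.1]
    · push_neg at ht
      constructor
      · apply div_nonneg _ h3.le
        nlinarith [t.2.2]
      · rw [div_le_one h3]
        nlinarith [t.2.2]
  have hgcont : Continuous g := by
    rw [hgdef]
    apply Continuous.if_le
    · fun_prop
    · fun_prop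
    · exact continuous_subtype_val
    · exact continuous_const
    · intro t ht
      rw [ht]
      field_simp
      ring
  set f : I → I := fun t => ⟨g t, hgmem t⟩ with hfdef
  have hfcont : Continuous f := hgcont.subtype_mk _
  have hg0 : g 0 = 0 := by
    show (if ((0:I):ℝ) ≤ 1/2 then _ else _) = (0:ℝ)
    rw [if_pos (by norm_num)]
    norm_num
  have hg1 : g 1 = 1 := by
    show (if ((1:I):ℝ) ≤ 1/2 then _ else _) = (1:ℝ)
    rw [if_neg (by norm_num)]
    rw [div_eq_one_iff_eq h3.ne']
    push_cast
    ring
  have hf0 : f 0 = 0 := Subtype.ext hg0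
  have hf1 : f 1 = 1 := Subtype.ext hg1
  have hrep : (toPath (seg γ x y)).Homotopic
      ((toPath (seg γ x y)).reparam f hfcont hf0 hf1) :=
    ⟨Path.Homotopy.reparam (toPath (seg γ x y)) f hfcont hf0 hf1⟩
  rw [cc_eq hend]
  refine pRel_coe (pRel_path hrep) rfl ?_
  funext t
  show seg γ x y (f t) = ((toPath (seg γ x m)).trans ((toPath (seg γ m y)).cast hend rfl)) t
  rw [Path.trans_apply]
  split_ifs with ht
  · -- first half
    have hval : ((f t : I) : ℝ) = (2*(t:ℝ))*(((m:ℝ)-x)/((y:ℝ)-x)) := by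
      show g t = _
      rw [hgdef]
      simp only [if_pos ht]
    show seg γ x y (f t) = seg γ x m _
    rw [seg_apply, seg_apply]
    congr 2
    rw [hval]
    show (x:ℝ) + ((y:ℝ)-x) * ((2*(t:ℝ))*(((m:ℝ)-x)/((y:ℝ)-x))) = (x:ℝ) + ((m:ℝ)-x) * (2*(t:ℝ))
    field_simp
  · -- second half
    push_neg at ht
    have hval : ((f t : I) : ℝ) = (((m:ℝ)-x) + (2*(t:ℝ)-1)*((y:ℝ)-m))/((y:ℝ)-x) := by
      show g t = _
      rw [hgdef]
      simp only [if_neg (not_le.mpr ht)]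
    show seg γ x y (f t) =
        ((toPath (seg γ m y)).cast hend rfl) ⟨2*(t:ℝ)-1, _⟩
    have hcast : ((toPath (seg γ m y)).cast hend rfl) (⟨2*(t:ℝ)-1, by constructor <;> [linarith; linarith [t.2.2]]⟩ : I) =
        seg γ m y ⟨2*(t:ℝ)-1, by constructor <;> [linarith; linarith [t.2.2]]⟩ := by
      exact congrFun (Path.cast_coe _ _ _) _
    rw [hcast]
    rw [seg_apply, seg_apply]
    congr 2
    rw [hval]
    show (x:ℝ) + ((y:ℝ)-x) * ((((m:ℝ)-x) + (2*(t:ℝ)-1)*((y:ℝ)-m))/((y:ℝ)-x)) =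
      (m:ℝ) + ((y:ℝ)-m) * (2*(t:ℝ)-1)
    field_simp
    ring

/-- Decomposition of a path along a partition, up to path homotopy. -/
theorem decomp (γ : C(I, X)) (t : ℕ → I) (ht0 : t 0 = 0) (hmono : Monotone t) :
    ∀ k, pRel (seg γ 0 (t (k+1))) (comps (fun i => seg γ (t i) (t (i+1))) k) := by
  intro k
  induction k with
  | zero =>
      have : comps (fun i => seg γ (t i) (t (i+1))) 0 = seg γ (t 0) (t 1) := rfl
      rw [this, ht0]
      exact pRel.refl _
  | succ k ih =>
      have hsplit' : pRel (seg γ 0 (t (k+2)))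
          (cc (seg γ (t (k+1)) (t (k+2))) (seg γ 0 (t (k+1)))) := by
        have h0 : (0 : I) ≤ t (k+1) := (t (k+1)).2.1
        exact seg_split γ h0 (hmono (Nat.le_succ (k+1)))
      have hend : (seg γ 0 (t (k+1))) 1 = (seg γ (t (k+1)) (t (k+2))) 0 := by
        rw [seg_one, seg_zero]
      exact hsplit'.trans' (pRel.cc_congr (pRel.refl _) ih hend)

theorem RelInessential.mono {U V : Set X} (h : RelInessential X U) (hVU : V ⊆ U) :
    RelInessential X V := fun γ hγ hloop => h γ (hγ.trans hVU) hloop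

/-- `X` is semilocally simply connected if every point has a relatively inessential
open neighbourhood. -/
def SemilocSimplyConnected (X : Type*) [TopologicalSpace X] : Prop :=
  ∀ x : X, ∃ U : Set X, IsOpen U ∧ x ∈ U ∧ RelInessential X U

/-- In a locally path connected semilocally simply connected space, every point of an open
set has a path connected relatively inessential open neighbourhood inside it. -/
theorem nbhd_choice [LocallyPathConnectedSpace X] (hX : SemilocSimplyConnected X) {x : X}
    {O : Set X} (hO : IsOpen O) (hx : x ∈ O) :
    ∃ U : Set X, IsOpen U ∧ x ∈ U ∧ U ⊆ O ∧ IsPathConnected U ∧ RelInessential X U := by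
  obtain ⟨W, hWopen, hxW, hWrel⟩ := hX x
  have hxm : x ∈ W ∩ O := ⟨hxW, hx⟩
  refine ⟨pathComponentIn (W ∩ O) x, (hWopen.inter hO).pathComponentIn x,
    mem_pathComponentIn_self hxm, pathComponentIn_subset.trans Set.inter_subset_right,
    isPathConnected_pathComponentIn hxm,
    hWrel.mono (pathComponentIn_subset.trans Set.inter_subset_left)⟩

/-- A compact-open neighbourhood of a constant map contains all maps with range in some
open set around the constant's value. -/
theorem exists_forall_range_subset {x : X} {O : Set (C(I, X))} (hO : IsOpen O)
    (hx : ContinuousMap.const I x ∈ O) :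
    ∃ W : Set X, IsOpen W ∧ x ∈ W ∧ ∀ f : C(I, X), range f ⊆ W → f ∈ O := by
  have hb := TopologicalSpace.isTopologicalBasis_of_subbasis
    (ContinuousMap.compactOpen_eq (X := I) (Y := X))
  obtain ⟨B, ⟨T, ⟨hTfin, hTsub⟩, rfl⟩, hxB, hBO⟩ := hb.exists_subset_of_mem_open hx hO
  refine ⟨{y | ContinuousMap.const I y ∈ ⋂₀ T}, ?_, hxB, ?_⟩
  · have : {y | ContinuousMap.const I y ∈ ⋂₀ T} = ⋂ A ∈ T, {y | ContinuousMap.const I y ∈ A} := by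
      ext y; simp [Set.mem_sInter]
    rw [this]
    refine hTfin.isOpen_biInter (fun A hA => ?_)
    obtain ⟨K, hK, U, hU, rfl⟩ := hTsub hA
    by_cases hKe : K = ∅
    · subst hKe
      have : {y | ContinuousMap.const I y ∈ {f : C(I,X) | Set.MapsTo f ∅ U}} = Set.univ := by
        ext y
        simp only [Set.mem_setOf_eq, Set.mem_univ, iff_true]
        exact Set.mapsTo_empty _ _
      rw [this]; exact isOpen_univ
    · obtain ⟨t0, ht0⟩ := Set.nonempty_iff_ne_empty.mpr hKe
      have : {y | ContinuousMap.const I y ∈ {f : C(I,X) | Set.MapsTo f K U}} = U := by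
        ext y
        constructor
        · intro hy; exact hy ht0
        · intro hy t ht; exact hy
      rw [this]; exact hU
  · intro f hf
    apply hBO
    rw [Set.mem_sInter]
    intro A hA
    obtain ⟨K, hK, U, hU, rfl⟩ := hTsub hA
    intro s hs
    have h1 : f s ∈ {y | ContinuousMap.const I y ∈ ⋂₀ T} := hf ⟨s, rfl⟩
    have h2 := (Set.mem_sInter.mp h1) _ hA
    exact h2 hs

-- ## the continuous concatenation map  (δ, θ) ↦ δ ⧠ α ⧠ θ

variable (α : C(I, X))

/-- Pairs (δ, θ) with `δ 0 = α 1` and `θ 1 = α 0`. -/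
def Ysp (α : C(I, X)) : Type _ := {p : C(I, X) × C(I, X) // p.1 0 = α 1 ∧ p.2 1 = α 0}

instance : TopologicalSpace (Ysp α) := by unfold Ysp; infer_instance

private def pj (r : ℝ) : I := Set.projIcc (0:ℝ) 1 zero_le_one r

private theorem pj_of_mem {r : ℝ} (h : r ∈ Set.Icc (0:ℝ) 1) (f : C(I, X)) :
    f (pj r) = f ⟨r, h⟩ := by
  unfold pj
  rw [Set.projIcc_of_mem]

/-- Uncurried triple concatenation. -/
def Fmap (α : C(I, X)) : Ysp α × I → X := fun z =>
  if (z.2:ℝ) ≤ 1/4 then z.1.1.2 (pj (2*(2*(z.2:ℝ))))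
  else if (z.2:ℝ) ≤ 1/2 then α (pj (2*(2*(z.2:ℝ))-1))
  else z.1.1.1 (pj (2*(z.2:ℝ)-1))

theorem pj_one : (pj 1 : I) = 1 := by
  apply Subtype.ext
  unfold pj
  rw [Set.projIcc_of_mem zero_le_one (by norm_num : (1:ℝ) ∈ Set.Icc (0:ℝ) 1)]
  norm_num

theorem pj_zero : (pj 0 : I) = 0 := by
  apply Subtype.ext
  unfold pj
  rw [Set.projIcc_of_mem zero_le_one (by norm_num : (0:ℝ) ∈ Set.Icc (0:ℝ) 1)]
  norm_num

theorem Fmap_continuous (α : C(I, X)) : Continuous (Fmap α) := by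
  unfold Fmap
  have hθ : Continuous fun z : Ysp α × I => (z.1.1.2 : C(I,X)) := by
    exact continuous_snd.comp ((continuous_subtype_val.comp continuous_fst))
  have hδ : Continuous fun z : Ysp α × I => (z.1.1.1 : C(I,X)) := by
    exact continuous_fst.comp ((continuous_subtype_val.comp continuous_fst))
  have hco : Continuous fun z : Ysp α × I => (z.2 : ℝ) :=
    continuous_subtype_val.comp continuous_snd
  have hpj : Continuous (pj : ℝ → I) := by unfold pj; exact continuous_projIcc
  have hA : Continuous fun z : Ysp α × I => z.1.1.2 (pj (2*(2*(z.2:ℝ)))) :=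
    continuous_eval.comp (hθ.prodMk (hpj.comp (by fun_prop)))
  have hB : Continuous fun z : Ysp α × I => α (pj (2*(2*(z.2:ℝ))-1)) :=
    α.continuous.comp (hpj.comp (by fun_prop))
  have hC : Continuous fun z : Ysp α × I => z.1.1.1 (pj (2*(z.2:ℝ)-1)) :=
    continuous_eval.comp (hδ.prodMk (hpj.comp (by fun_prop)))
  have hBC : Continuous fun z : Ysp α × I =>
      if (z.2:ℝ) ≤ 1/2 then α (pj (2*(2*(z.2:ℝ))-1)) else z.1.1.1 (pj (2*(z.2:ℝ)-1)) := by
    refine Continuous.if_le hB hC hco continuous_const ?_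
    intro z hz
    rw [hz]
    have e1 : (2:ℝ)*(2*(1/2)) - 1 = 1 := by norm_num
    have e2 : (2:ℝ)*(1/2) - 1 = 0 := by norm_num
    rw [e1, e2, pj_one, pj_zero]
    exact z.1.2.1.symm
  refine Continuous.if_le hA hBC hco continuous_const ?_
  intro z hz
  rw [hz]
  rw [if_pos (by norm_num : (1:ℝ)/4 ≤ 1/2)]
  have e1 : (2:ℝ)*(2*(1/4)) = 1 := by norm_num
  have e2 : (2:ℝ)*(2*(1/4)) - 1 = 0 := by norm_num
  rw [e2, e1, pj_one, pj_zero]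
  exact z.1.2.2

/-- The triple concatenation as a continuous map. -/
def Phi (α : C(I, X)) : C(Ysp α, C(I, X)) :=
  ContinuousMap.curry ⟨Fmap α, Fmap_continuous α⟩

theorem Phi_eq (y : Ysp α) :
    Phi α y = concat y.1.1 (concat α y.1.2 y.2.2)
      ((concat_one α y.1.2 y.2.2).trans y.2.1.symm) := by
  ext t
  show Fmap α (y, t) = _
  obtain ⟨⟨δ, θ⟩, hδ, hθ⟩ := y
  have rhs : concat δ (concat α θ hθ) ((concat_one α θ hθ).trans hδ.symm) t =
      ((toPath (concat α θ hθ)).trans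
        ((toPath δ).cast ((concat_one α θ hθ).trans hδ.symm) rfl)) t := rfl
  rw [rhs, Path.trans_apply]
  unfold Fmap
  simp only
  split_ifs with h1 h2
  · -- t ≤ 1/4, t ≤ 1/2 : θ branch, inner trans
    have inner : (toPath (concat α θ hθ)) ⟨2*(t:ℝ), by constructor <;> nlinarith [t.2.1, t.2.2]⟩ =
        ((toPath θ).trans ((toPath α).cast hθ rfl)) ⟨2*(t:ℝ), by constructor <;> nlinarith [t.2.1, t.2.2]⟩ := rfl
    rw [inner, Path.trans_apply]
    rw [dif_pos (show ((⟨2*(t:ℝ), by constructor <;> nlinarith [t.2.1, t.2.2]⟩ : I) : ℝ) ≤ 1/2 by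
      show 2*(t:ℝ) ≤ 1/2; linarith)]
    rw [pj_of_mem (by constructor <;> nlinarith [t.2.1] : 2*(2*(t:ℝ)) ∈ Set.Icc (0:ℝ) 1)]
    congr 1
  · exact absurd (by linarith : (t:ℝ) ≤ 1/2) h2
  · -- 1/4 < t ≤ 1/2 : α branch
    have inner : (toPath (concat α θ hθ)) ⟨2*(t:ℝ), by constructor <;> nlinarith [t.2.1, t.2.2]⟩ =
        ((toPath θ).trans ((toPath α).cast hθ rfl)) ⟨2*(t:ℝ), by constructor <;> nlinarith [t.2.1, t.2.2]⟩ := rfl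
    rw [inner, Path.trans_apply]
    rw [dif_neg (show ¬((⟨2*(t:ℝ), by constructor <;> nlinarith [t.2.1, t.2.2]⟩ : I) : ℝ) ≤ 1/2 by
      show ¬(2*(t:ℝ) ≤ 1/2); push_neg at h1 ⊢; linarith)]
    have hcast := congrFun (Path.cast_coe (toPath α) hθ rfl)
    rw [hcast]
    rw [pj_of_mem (by push_neg at h1; constructor <;> nlinarith : 2*(2*(t:ℝ))-1 ∈ Set.Icc (0:ℝ) 1)]
    congr 1
  · -- t > 1/2 : δ branch
    have hcast := congrFun (Path.cast_coe (toPath δ) ((concat_one α θ hθ).trans hδ.symm) rfl)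
    rw [hcast]
    have hmem : 2*(t:ℝ)-1 ∈ Set.Icc (0:ℝ) 1 := by
      constructor <;> nlinarith [t.2.1, t.2.2, (by assumption : ¬ (t:ℝ) ≤ 1/2)]
    rw [pj_of_mem hmem]
    rfl

/-- The set `N([γ], U, V) = {[δ ⧠ γ ⧠ θ] : δ a path in U with δ 0 = γ 1,
θ a path in V with θ 1 = γ 0}` in `Π₁(X)`. -/
def Nhd (a : Pi1 X) (U V : Set X) : Set (Pi1 X) :=
  { b | ∃ (γ δ θ : C(I, X)) (h₁ : θ 1 = γ 0) (h₂ : γ 1 = δ 0),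
      pq γ = a ∧ Set.range δ ⊆ U ∧ Set.range θ ⊆ V ∧
      b = pq (concat δ (concat γ θ h₁) ((concat_one γ θ h₁).trans h₂)) }

theorem pq_concat_const (α : C(I, X)) :
    pq (concat (ContinuousMap.const I (α 1))
      (concat α (ContinuousMap.const I (α 0)) rfl)
      ((concat_one α (ContinuousMap.const I (α 0)) rfl).trans rfl)) = pq α := by
  apply pq_eq_iff.mpr
  have e1 : pRel (concat α (ContinuousMap.const I (α 0)) rfl) α := by
    have := pRel_cc_const_right α
    rw [cc_eq rfl] at this
    exact this
  set Z : C(I, X) := concat α (ContinuousMap.const I (α 0)) rfl with hZ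
  have hZ1 : Z 1 = α 1 := by rw [hZ]; exact concat_one _ _ _
  have e2 : pRel (concat (ContinuousMap.const I (α 1)) Z
      ((concat_one α (ContinuousMap.const I (α 0)) rfl).trans rfl)) Z := by
    have := pRel_cc_const_left Z
    rw [hZ1] at this
    rw [cc_eq (show Z 1 = (ContinuousMap.const I (α 1)) 0 from hZ1)] at this
    exact this
  exact e2.trans' e1

/-- Forward direction: if `M` is CO'-open then every class in it has a UC basic
neighbourhood inside it. -/
theorem stmt2_mp [LocallyPathConnectedSpace X] (hX : SemilocSimplyConnected X)
    (M : Set (Pi1 X)) (hM : IsOpen M) (α : C(I, X)) (hα : pq α ∈ M) :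
    ∃ U V : Set X, IsOpen U ∧ IsOpen V ∧ IsPathConnected U ∧ IsPathConnected V ∧
      RelInessential X U ∧ RelInessential X V ∧ α 1 ∈ U ∧ α 0 ∈ V ∧
      Nhd (pq α) U V ⊆ M := by
  have hS : IsOpen (pq ⁻¹' M) := hM.preimage continuous_quotient_mk'
  set y₀ : Ysp α := ⟨(ContinuousMap.const I (α 1), ContinuousMap.const I (α 0)), rfl, rfl⟩
    with hy₀def
  have hy₀ : y₀ ∈ (Phi α) ⁻¹' (pq ⁻¹' M) := by
    show pq (Phi α y₀) ∈ M
    rw [Phi_eq α y₀]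
    show pq (concat (ContinuousMap.const I (α 1))
      (concat α (ContinuousMap.const I (α 0)) _) _) ∈ M
    rw [pq_concat_const α]
    exact hα
  have hopen : IsOpen ((Phi α) ⁻¹' (pq ⁻¹' M)) := hS.preimage (Phi α).continuous
  obtain ⟨O', hO', hpre⟩ := isOpen_induced_iff.mp hopen
  have hy₀' : (y₀ : Ysp α).1 ∈ O' := by
    have : y₀ ∈ Subtype.val ⁻¹' O' := by exact (Set.ext_iff.mp hpre y₀).mpr hy₀
    exact this
  obtain ⟨O₁, O₂, h₁, h₂, hm₁, hm₂, hsub⟩ :=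
    isOpen_prod_iff.mp hO' (ContinuousMap.const I (α 1)) (ContinuousMap.const I (α 0)) hy₀'
  obtain ⟨W₁, hW₁o, hW₁x, hW₁⟩ := exists_forall_range_subset h₁ hm₁
  obtain ⟨W₂, hW₂o, hW₂x, hW₂⟩ := exists_forall_range_subset h₂ hm₂
  obtain ⟨U, hUo, hUx, hUW, hUpc, hUrel⟩ := nbhd_choice hX hW₁o hW₁x
  obtain ⟨V, hVo, hVx, hVW, hVpc, hVrel⟩ := nbhd_choice hX hW₂o hW₂x
  refine ⟨U, V, hUo, hVo, hUpc, hVpc, hUrel, hVrel, hUx, hVx, ?_⟩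
  rintro b ⟨γ, δ, θ, hθγ, hγδ, hγ, hδr, hθr, rfl⟩
  have hrel : pRel γ α := pq_eq_iff.mp hγ
  have eγ0 : γ 0 = α 0 := hrel.endpts (by simp)
  have eγ1 : γ 1 = α 1 := hrel.endpts (by simp)
  have hδ0 : δ 0 = α 1 := by rw [← hγδ]; exact eγ1
  have hθ1 : θ 1 = α 0 := by rw [hθγ]; exact eγ0
  set y : Ysp α := ⟨(δ, θ), hδ0, hθ1⟩ with hydef
  have hyS : pq (Phi α y) ∈ M := by
    have : y ∈ Subtype.val ⁻¹' O' := by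
      apply Set.mem_of_mem_of_subset _ (Set.preimage_mono (α := Ysp α) hsub)
      show y ∈ Subtype.val ⁻¹' (O₁ ×ˢ O₂)
      exact Set.mem_preimage.mpr ⟨hW₁ δ (hδr.trans hUW), hW₂ θ (hθr.trans hVW)⟩
    exact (Set.ext_iff.mp hpre y).mp this
  rw [Phi_eq α y] at hyS
  have hinner : pRel (concat γ θ hθγ) (concat α θ hθ1) :=
    pRel.concat_congr hrel (pRel.refl θ) hθγ hθ1
  have houter : pRel (concat δ (concat γ θ hθγ) ((concat_one γ θ hθγ).trans hγδ))
      (concat δ (concat α θ hθ1) ((concat_one α θ hθ1).trans hδ0.symm)) :=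
    pRel.concat_congr (pRel.refl δ) hinner _ _
  rw [pq_eq_iff.mpr houter]
  exact hyS

/-- Reverse direction : the UC condition implies CO'-openness. -/
theorem stmt2_mpr [LocallyPathConnectedSpace X] (hX : SemilocSimplyConnected X)
    (M : Set (Pi1 X))
    (hcond : ∀ α : C(I, X), pq α ∈ M →
      ∃ U V : Set X, IsOpen U ∧ IsOpen V ∧ IsPathConnected U ∧ IsPathConnected V ∧
        RelInessential X U ∧ RelInessential X V ∧ α 1 ∈ U ∧ α 0 ∈ V ∧
        Nhd (pq α) U V ⊆ M) : IsOpen M := by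
  have key : IsOpen (pq ⁻¹' M) := by
    rw [isOpen_iff_forall_mem_open]
    intro α hα
    obtain ⟨U, V, hUo, hVo, hUpc, hVpc, hUrel, hVrel, hUx, hVx, hNhd⟩ := hcond α hα
    -- choice of relatively inessential neighbourhoods
    choose Wf hWfo hWfm hWfr using hX
    -- partition of I
    obtain ⟨t, ht0, htmono, ⟨n₀, hn₀⟩, hsub⟩ :=
      exists_monotone_Icc_subset_open_cover_unitInterval
        (c := fun s : I => α ⁻¹' (Wf (α s)))
        (fun s => (hWfo (α s)).preimage α.continuous)
        (fun s _ => Set.mem_iUnion.mpr ⟨s, hWfm (α s)⟩)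
    choose sfun hsfun using hsub
    obtain ⟨K, hK⟩ : ∃ K, max n₀ 1 = K + 1 :=
      Nat.exists_eq_succ_of_ne_zero (by positivity)
    set N := K + 1 with hNdef
    have hNn₀ : n₀ ≤ N := by rw [← hK]; exact le_max_left _ _
    have htN : ∀ m, N ≤ m → t m = 1 := fun m hm => hn₀ m (hNn₀.trans hm)
    set W : ℕ → Set X := fun n => Wf (α (sfun n)) with hWdef
    have hαW : ∀ n, ∀ s, t n ≤ s → s ≤ t (n+1) → α s ∈ W n :=
      fun n s h1 h2 => hsfun n ⟨h1, h2⟩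
    -- connector neighbourhoods
    set H : ℕ → Set X := fun n =>
      if n = 0 then W 0 ∩ V else if n < N then W (n-1) ∩ W n else W K ∩ U with hHdef
    have hHo : ∀ n, IsOpen (H n) := by
      intro n
      simp only [hHdef]
      split_ifs with h h'
      · exact (hWfo _).inter hVo
      · exact (hWfo _).inter (hWfo _)
      · exact (hWfo _).inter hUo
    have hHm : ∀ n, n ≤ N → α (t n) ∈ H n := by
      intro n hn
      simp only [hHdef]
      split_ifs with h h'
      · subst h
        refine ⟨hαW 0 (t 0) le_rfl (htmono (Nat.zero_le 1)), ?_⟩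
        rw [ht0]; exact hVx
      · obtain ⟨m, rfl⟩ := Nat.exists_eq_succ_of_ne_zero h
        constructor
        · have : m + 1 - 1 = m := rfl
          rw [this]
          exact hαW m (t (m+1)) (htmono (Nat.le_succ m)) le_rfl
        · exact hαW (m+1) (t (m+1)) le_rfl (htmono (Nat.le_succ (m+1)))
      · have hnN : n = N := le_antisymm hn (not_lt.mp h')
        subst hnN
        constructor
        · exact hαW K (t (K+1)) (htmono (Nat.le_succ K)) le_rfl
        · rw [htN N le_rfl]; exact hUx
    set G : ℕ → Set X := fun n => pathComponentIn (H n) (α (t n)) with hGdef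
    have hGo : ∀ n, IsOpen (G n) := fun n => (hHo n).pathComponentIn _
    have hGm : ∀ n, n ≤ N → α (t n) ∈ G n := fun n hn => mem_pathComponentIn_self (hHm n hn)
    have hGpc : ∀ n, n ≤ N → IsPathConnected (G n) :=
      fun n hn => isPathConnected_pathComponentIn (hHm n hn)
    have hGsub : ∀ n, G n ⊆ H n := fun n => pathComponentIn_subset
    -- the open CO neighbourhood of α
    refine ⟨(⋂ n ∈ Finset.range N, {f : C(I,X) | Set.MapsTo f (Set.Icc (t n) (t (n+1))) (W n)})
      ∩ (⋂ n ∈ Finset.range (N+1), {f : C(I,X) | f (t n) ∈ G n}), ?_, ?_, ?_⟩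
    · -- subset of pq ⁻¹' M
      rintro β ⟨hβ1, hβ2⟩
      simp only [Set.mem_iInter, Finset.mem_range] at hβ1 hβ2
      -- connectors
      have hJ : ∀ n, n ≤ N → ∃ q : C(I,X), q 0 = α (t n) ∧ q 1 = β (t n) ∧ range q ⊆ G n := by
        intro n hn
        have hβG : β (t n) ∈ G n := hβ2 n (Nat.lt_succ_of_le hn)
        obtain ⟨p, hp⟩ := (hGpc n hn).joinedIn _ (hGm n hn) _ hβG
        exact ⟨p.toContinuousMap, p.source, p.target, by rintro _ ⟨u, rfl⟩; exact hp u⟩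
      have hJ' : ∀ n, ∃ q : C(I,X), q 0 = α (t (min n N)) ∧ q 1 = β (t (min n N)) ∧
          range q ⊆ G (min n N) := fun n => hJ (min n N) (min_le_right n N)
      choose q hq0 hq1 hqr using hJ'
      -- note : for n ≤ N, min n N = n
      have hmin : ∀ n, n ≤ N → min n N = n := fun n hn => min_eq_left hn
      -- data for keylemma
      set a : ℕ → C(I,X) := fun n => seg α (t n) (t (n+1)) with hadef
      set b : ℕ → C(I,X) := fun n => seg β (t n) (t (n+1)) with hbdef
      set cpaths : ℕ → C(I,X) := fun n => q (n+1) with hcdef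
      set d : C(I,X) := symmCM (q 0) with hddef
      have hq0' : ∀ n, n ≤ N → q n 0 = α (t n) := by
        intro n hn; have := hq0 n; rwa [hmin n hn] at this
      have hq1' : ∀ n, n ≤ N → q n 1 = β (t n) := by
        intro n hn; have := hq1 n; rwa [hmin n hn] at this
      have hqr' : ∀ n, n ≤ N → range (q n) ⊆ G n := by
        intro n hn; have := hqr n; rwa [hmin n hn] at this
      have hGW : ∀ n, 1 ≤ n → n ≤ N → G n ⊆ W (n-1) := by
        intro n h1 h2
        refine (hGsub n).trans ?_
        simp only [hHdef]
        split_ifs with h h'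
        · omega
        · exact Set.inter_subset_left
        · have : n = N := le_antisymm h2 (not_lt.mp h')
          subst this
          exact Set.inter_subset_left
      have hGW' : ∀ n, 1 ≤ n → n < N → G n ⊆ W n := by
        intro n h1 h2
        refine (hGsub n).trans ?_
        simp only [hHdef]
        rw [if_neg (by omega : ¬ n = 0), if_pos h2]
        exact Set.inter_subset_right
      have main : pRel (comps b K) (cc (cpaths K) (cc (comps a K) d)) := by
        apply keylemma K a b cpaths d W
        · intro i _; simp only [hadef]; simp
        · intro i _; simp only [hbdef]; simp
        · intro i _; exact hWfr _
        · intro i hi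
          simp only [hadef]
          exact range_seg α (htmono (Nat.le_succ i)) (fun s h1 h2 => hαW i s h1 h2)
        · intro i hi
          simp only [hbdef]
          exact range_seg β (htmono (Nat.le_succ i))
            (fun s h1 h2 => hβ1 i (by omega) ⟨h1, h2⟩)
        · intro i hi
          simp only [hcdef, hadef]
          rw [hq0' (i+1) (by omega)]
          simp
        · intro i hi
          simp only [hcdef, hbdef]
          rw [hq1' (i+1) (by omega)]
          simp
        · intro i hi
          simp only [hcdef]
          refine (hqr' (i+1) (by omega)).trans ((hGW (i+1) (by omega) (by omega)).trans ?_)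
          have : i + 1 - 1 = i := rfl
          rw [this]
        · intro i hi
          simp only [hcdef]
          exact (hqr' (i+1) (by omega)).trans (hGW' (i+1) (by omega) (by omega))
        · simp only [hddef, hbdef]
          rw [symmCM_zero, hq1' 0 (Nat.zero_le N)]
          simp
        · simp only [hddef, hadef]
          rw [symmCM_one, hq0' 0 (Nat.zero_le N)]
          simp
        · simp only [hddef, range_symmCM]
          refine (hqr' 0 (Nat.zero_le N)).trans ((hGsub 0).trans ?_)
          simp only [hHdef]
          exact Set.inter_subset_left
      -- decomposition of α and β
      have hdecα : pRel α (comps a K) := by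
        have := decomp α t ht0 htmono K
        rwa [htN (K+1) le_rfl, seg_zero_one] at this
      have hdecβ : pRel β (comps b K) := by
        have := decomp β t ht0 htmono K
        rwa [htN (K+1) le_rfl, seg_zero_one] at this
      -- assemble Nhd membership
      have hadj : ∀ i < K, a (i+1) 0 = a i 1 := by intro i _; simp only [hadef]; simp
      have hA0 : comps a K 0 = α (t 0) := by rw [comps_zero K hadj, hadef]; simp
      have hA1 : comps a K 1 = α (t K.succ) := by rw [comps_one K hadj, hadef]; simp
      have hθ1 : d 1 = comps a K 0 := by
        rw [hA0, hddef, symmCM_one, hq0' 0 (Nat.zero_le N)]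
      have hδ0 : comps a K 1 = cpaths K 0 := by
        rw [hA1, hcdef, hq0' (K+1) le_rfl]
      have hmem : pq β ∈ Nhd (pq α) U V := by
        refine ⟨comps a K, cpaths K, d, hθ1, hδ0, (pq_eq_iff.mpr hdecα).symm, ?_, ?_, ?_⟩
        · -- range δ ⊆ U
          simp only [hcdef]
          refine (hqr' (K+1) le_rfl).trans ((hGsub (K+1)).trans ?_)
          simp only [hHdef]
          rw [if_neg (by omega), if_neg (by omega)]
          exact Set.inter_subset_right
        · -- range θ ⊆ V
          simp only [hddef, range_symmCM]
          refine (hqr' 0 (Nat.zero_le N)).trans ((hGsub 0).trans ?_)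
          simp only [hHdef]
          exact Set.inter_subset_right
        · -- pq β = pq (concat ...)
          apply pq_eq_iff.mpr
          have e : cc (cpaths K) (cc (comps a K) d) =
              concat (cpaths K) (concat (comps a K) d hθ1)
                ((concat_one _ _ hθ1).trans hδ0) := by
            rw [cc_eq hθ1, cc_eq ((concat_one _ _ hθ1).trans hδ0)]
          rw [← e]
          exact hdecβ.trans' main
      exact hNhd hmem
    · -- openness
      apply IsOpen.inter
      · refine isOpen_biInter_finset (fun n _ => ?_)
        exact ContinuousMap.isOpen_setOf_mapsTo isClosed_Icc.isCompact (hWfo _)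
      · refine isOpen_biInter_finset (fun n _ => ?_)
        exact (hGo n).preimage (continuous_eval_const (t n))
    · -- α belongs
      constructor
      · simp only [Set.mem_iInter, Finset.mem_range]
        intro n _ s hs
        exact hαW n s hs.1 hs.2
      · simp only [Set.mem_iInter, Finset.mem_range]
        intro n hn
        exact hGm n (by omega)
  exact key


/-- For a locally path connected, semilocally simply connected `X`,
a set `M ⊆ Π₁(X)` is CO'-open iff every `[α] ∈ M` has a basic UC-neighbourhood
`N([α],U,V) ⊆ M` with `U, V` path connected relatively inessential open sets;
i.e. the CO' and UC topologies coincide. -/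
theorem stmt2 {X : Type*} [TopologicalSpace X] [LocallyPathConnectedSpace X]
    (hX : SemilocSimplyConnected X) (M : Set (Pi1 X)) :
    IsOpen M ↔ ∀ α : C(I, X), pq α ∈ M →
      ∃ U V : Set X, IsOpen U ∧ IsOpen V ∧ IsPathConnected U ∧ IsPathConnected V ∧
        RelInessential X U ∧ RelInessential X V ∧ α 1 ∈ U ∧ α 0 ∈ V ∧
        Nhd (pq α) U V ⊆ M := by
  constructor
  · intro hM α hα
    exact stmt2_mp hX M hM α hα
  · intro h
    exact stmt2_mpr hX M h

end
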